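/- The function t ↦ sin(αt)/sin((2-α)t) is strictly increasing on (0, π/2) for every fixed α ∈ (0, 1/2]. -/

import Mathlib

open Real

theorem stmt_8 (α : ℝ) (h0 : 0 < α) (h1 : α ≤ 1/2) :
    StrictMonoOn (fun t : ℝ => sin (α*t) / sin ((2-α)*t)) (Set.Ioo 0 (π/2)) := by
  have hπ := Real.pi_pos
  apply strictMonoOn_of_deriv_pos (convex_Ioo _ _)
  · apply ContinuousOn.div
    · fun_prop
    · fun_prop
    · intro t ht
      have : 0 < sin ((2-α)*t) := by
        apply sin_pos_of_pos_of_lt_pi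
        · nlinarith [ht.1, ht.2]
        · nlinarith [ht.1, ht.2]
      linarith
  · intro t ht
    rw [interior_Ioo] at ht
    obtain ⟨ht1, ht2⟩ := ht
    have hs : 0 < sin ((2-α)*t) := by
      apply sin_pos_of_pos_of_lt_pi <;> nlinarith
    have hd1 : HasDerivAt (fun t : ℝ => sin (α*t)) (cos (α*t) * α) t := by
      simpa [Function.comp_def] using (Real.hasDerivAt_sin (α*t)).comp t ((hasDerivAt_id t).const_mul α)
    have hd2 : HasDerivAt (fun t : ℝ => sin ((2-α)*t)) (cos ((2-α)*t) * (2-α)) t := by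
      simpa [Function.comp_def] using (Real.hasDerivAt_sin ((2-α)*t)).comp t ((hasDerivAt_id t).const_mul (2-α))
    have hd := hd1.div hd2 hs.ne'
    rw [show (fun t : ℝ => sin (α*t) / sin ((2-α)*t)) = ((fun t : ℝ => sin (α*t)) / fun t => sin ((2-α)*t)) from rfl, hd.deriv]
    -- key inequality from strict concavity of sin
    have hconc := strictConcaveOn_sin_Icc.2 (x := (0:ℝ)) (y := 2*t)
      ⟨le_refl 0, le_of_lt hπ⟩ ⟨by linarith, by linarith⟩ (by nlinarith)
      (show (0:ℝ) < α from h0) (show (0:ℝ) < 1-α by linarith) (by ring)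
    simp only [smul_eq_mul, Real.sin_zero, mul_zero, zero_add] at hconc
    have hkey : (1-α) * sin (2*t) < sin ((2-2*α)*t) := by
      have : (1-α) * (2*t) = (2-2*α)*t := by ring
      rw [this] at hconc
      linarith
    -- rewrite sin(2t) and sin((2-2α)t) via addition formulas
    have e1 : (2:ℝ)*t = α*t + (2-α)*t := by ring
    have e2 : (2-2*α)*t = (2-α)*t - α*t := by ring
    rw [e1, e2, Real.sin_add, Real.sin_sub] at hkey
    have hnum : 0 < cos (α*t) * α * sin ((2-α)*t) - sin (α*t) * (cos ((2-α)*t) * (2-α)) := by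
      nlinarith [hkey]
    positivity
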